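/- Let R be a commutative Noetherian ring, N ⊆ M and N′ ⊆ M′ submodules of finitely generated R-modules, and p a prime ideal. If N ⊂^{p} K is a regular p-prime extension in M and N′ ⊂^{p} K′ is a regular p-prime extension in M′, then N ⊕ N′ ⊂^{p} K ⊕ K′ is a regular p-prime extension in M ⊕ M′. -/

import Mathlib

variable {R : Type*} [CommRing R] {M : Type*} [AddCommGroup M] [Module R M]

/-- The colon submodule `(N :_M I) = {x ∈ M | I • x ⊆ N}`. -/
def colonSubmodule (N : Submodule R M) (I : Ideal R) : Submodule R M where
  carrier := {x | ∀ a ∈ I, a • x ∈ N}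
  add_mem' := fun hx hy a ha => by simpa [smul_add] using N.add_mem (hx a ha) (hy a ha)
  zero_mem' := fun a _ => by simp
  smul_mem' := fun c x hx a ha => by
    rw [smul_comm]
    exact N.smul_mem c (hx a ha)

/-- `K` is a `p`-prime extension of `N`, i.e. `N` is a `p`-prime submodule of `K`. -/
def IsPrimeExt (p : Ideal R) (N K : Submodule R M) : Prop :=
  N < K ∧ N.colon K = p ∧ ∀ a : R, ∀ x ∈ K, a • x ∈ N → x ∈ N ∨ a ∈ p

/-- The associated primes of `T / N` for submodules `N ≤ T ≤ M`. -/
def assOf (R : Type*) {M : Type*} [CommRing R] [AddCommGroup M] [Module R M]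
    (N T : Submodule R M) : Set (Ideal R) :=
  associatedPrimes R ↥(T.map N.mkQ)

/-- `K` is a maximal `p`-prime extension of `N` inside `T`. -/
def IsMaximalPrimeExtIn (T : Submodule R M) (p : Ideal R) (N K : Submodule R M) : Prop :=
  K ≤ T ∧ IsPrimeExt p N K ∧ ∀ L ≤ T, IsPrimeExt p N L → ¬ K < L

/-- `K` is a regular `p`-prime extension of `N` inside `T`: a maximal `p`-prime
extension where `p` is a maximal element of `Ass (T/N)`. -/
def IsRegularPrimeExtIn (T : Submodule R M) (p : Ideal R) (N K : Submodule R M) : Prop :=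
  IsMaximalPrimeExtIn T p N K ∧ Maximal (· ∈ assOf R N T) p

/-- A regular prime extension (RPE) filtration inside `T` with primes `p i`. -/
def IsRPEFiltrationIn (T : Submodule R M) {n : ℕ}
    (F : Fin (n + 1) → Submodule R M) (p : Fin n → Ideal R) : Prop :=
  ∀ i : Fin n, IsRegularPrimeExtIn T (p i) (F i.castSucc) (F i.succ)

/-- The generalized prime ideal factorization of `N` in `T` is given by the multiset `s`:
there is an RPE filtration of `T` over `N` whose multiset of primes is `s`. -/
def HasGPIF (N T : Submodule R M) (s : Multiset (Ideal R)) : Prop :=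
  ∃ (n : ℕ) (F : Fin (n + 1) → Submodule R M) (p : Fin n → Ideal R),
    F 0 = N ∧ F (Fin.last n) = T ∧ IsRPEFiltrationIn T F p ∧ (List.ofFn p : Multiset (Ideal R)) = s

/-- `assOf R N ⊤` is just the set of associated primes of `M ⧸ N`. -/
lemma assOf_top (N : Submodule R M) : assOf R N ⊤ = associatedPrimes R (M ⧸ N) := by
  unfold assOf
  rw [Submodule.map_top, Submodule.range_mkQ]
  exact LinearEquiv.AssociatedPrimes.eq Submodule.topEquiv

/-- Annihilator of the class of `x` in `M ⧸ N`. -/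
lemma mem_ann_mkQ (N : Submodule R M) (x : M) (a : R) :
    a ∈ (Submodule.span R {N.mkQ x}).annihilator ↔ a • x ∈ N := by
  rw [Submodule.mem_annihilator_span_singleton, ← map_smul, Submodule.mkQ_apply,
    Submodule.Quotient.mk_eq_zero]

lemma colon_bot_eq_ann (x : M) :
    (⊥ : Submodule R M).colon {x} = (Submodule.span R {x}).annihilator := by
  ext r
  rw [Submodule.mem_colon_singleton, Submodule.mem_bot, Submodule.mem_annihilator_span_singleton]

/-- Key absorption lemma: if `K` is a regular `p`-prime extension of `N` in `⊤` and
`p • x ⊆ N`, then `x ∈ K`. -/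
lemma mem_of_regular_of_smul_mem [IsNoetherianRing R] {p : Ideal R} {N K : Submodule R M}
    (h : IsRegularPrimeExtIn ⊤ p N K) (x : M) (hpx : ∀ a ∈ p, a • x ∈ N) : x ∈ K := by
  obtain ⟨⟨-, hKpe, hmax⟩, hpmax⟩ := h
  set T := K ⊔ Submodule.span R {x} with hT
  have hKT : K ≤ T := le_sup_left
  have hxT : x ∈ T :=
    (le_sup_right : Submodule.span R {x} ≤ T) (Submodule.mem_span_singleton_self x)
  have hTmem : ∀ y ∈ T, ∃ k ∈ K, ∃ c : R, y = k + c • x := by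
    intro y hy
    obtain ⟨k, hk, z, hz, rfl⟩ := Submodule.mem_sup.mp hy
    obtain ⟨c, rfl⟩ := Submodule.mem_span_singleton.mp hz
    exact ⟨k, hk, c, rfl⟩
  have hpK : ∀ a ∈ p, ∀ k ∈ K, a • k ∈ N := by
    intro a ha k hk
    have : a ∈ N.colon K := hKpe.2.1 ▸ ha
    exact Submodule.mem_colon.mp this k hk
  have hpT : ∀ a ∈ p, ∀ y ∈ T, a • y ∈ N := by
    intro a ha y hy
    obtain ⟨k, hk, c, rfl⟩ := hTmem y hy
    have h2 : a • (c • x) ∈ N := by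
      rw [smul_comm]; exact N.smul_mem c (hpx a ha)
    simpa [smul_add] using N.add_mem (hpK a ha k hk) h2
  have hTpe : IsPrimeExt p N T := by
    refine ⟨lt_of_lt_of_le hKpe.1 hKT, ?_, ?_⟩
    · refine le_antisymm ?_ ?_
      · rw [← hKpe.2.1]
        intro a ha
        rw [Submodule.mem_colon] at ha ⊢
        exact fun k hk => ha k (hKT hk)
      · intro a ha
        rw [Submodule.mem_colon]
        exact fun y hy => hpT a ha y hy
    · intro a y hy hay
      by_cases hyN : y ∈ N
      · exact Or.inl hyN
      right
      have hne : N.mkQ y ≠ 0 := by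
        rw [Submodule.mkQ_apply, Ne, Submodule.Quotient.mk_eq_zero]
        exact hyN
      obtain ⟨q, hq, hle⟩ := exists_le_isAssociatedPrime_of_isNoetherianRing R (N.mkQ y) hne
      have key : ∀ b : R, b • y ∈ N → b ∈ q := fun b hb => hle (by rw [colon_bot_eq_ann]; exact (mem_ann_mkQ N y b).mpr hb)
      have hqass : q ∈ assOf R N (⊤ : Submodule R M) := by
        rw [assOf_top]; exact hq
      have hpq : p ≤ q := fun b hb => key b (hpT b hb y hy)
      exact hpmax.2 hqass hpq (key a hay)
  have hTK : T ≤ K := by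
    by_contra hc
    exact hmax T le_top hTpe (lt_of_le_not_ge hKT hc)
  exact hTK hxT

/-- If `N ⊂^p K` and `N' ⊂^p K'` are regular `p`-prime extensions in `M` and `M'`,
then `N ⊕ N' ⊂^p K ⊕ K'` is a regular `p`-prime extension in `M ⊕ M'`. -/
theorem regular_prime_ext_prod {R : Type*} [CommRing R] [IsNoetherianRing R]
    {M : Type*} [AddCommGroup M] [Module R M] [Module.Finite R M]
    {M' : Type*} [AddCommGroup M'] [Module R M'] [Module.Finite R M']
    (p : Ideal R) (hp : p.IsPrime)
    (N K : Submodule R M) (N' K' : Submodule R M')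
    (h : IsRegularPrimeExtIn ⊤ p N K) (h' : IsRegularPrimeExtIn ⊤ p N' K') :
    IsRegularPrimeExtIn ⊤ p (N.prod N') (K.prod K') := by
  obtain ⟨⟨-, hKpe, hmax⟩, hpmax⟩ := h
  obtain ⟨⟨-, hKpe', hmax'⟩, hpmax'⟩ := h'
  have hpK : ∀ a ∈ p, ∀ k ∈ K, a • k ∈ N := by
    intro a ha k hk
    exact Submodule.mem_colon.mp (hKpe.2.1 ▸ ha : a ∈ N.colon K) k hk
  have hpK' : ∀ a ∈ p, ∀ k ∈ K', a • k ∈ N' := by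
    intro a ha k hk
    exact Submodule.mem_colon.mp (hKpe'.2.1 ▸ ha : a ∈ N'.colon K') k hk
  constructor
  · refine ⟨le_top, ⟨?_, ?_, ?_⟩, ?_⟩
    · -- N.prod N' < K.prod K'
      rw [SetLike.lt_iff_le_and_exists]
      obtain ⟨x, hxK, hxN⟩ := (SetLike.lt_iff_le_and_exists.mp hKpe.1).2
      refine ⟨fun y hy => ?_, (x, 0), ?_, ?_⟩
      · rw [Submodule.mem_prod] at hy ⊢
        exact ⟨hKpe.1.le hy.1, hKpe'.1.le hy.2⟩
      · exact Submodule.mem_prod.mpr ⟨hxK, K'.zero_mem⟩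
      · rw [Submodule.mem_prod]
        exact fun hc => hxN hc.1
    · -- colon
      refine le_antisymm ?_ ?_
      · intro a ha
        rw [Submodule.mem_colon] at ha
        rw [← hKpe.2.1, Submodule.mem_colon]
        intro k hk
        have := ha (k, 0) (Submodule.mem_prod.mpr ⟨hk, K'.zero_mem⟩)
        rw [Submodule.mem_prod] at this
        exact this.1
      · intro a ha
        rw [Submodule.mem_colon]
        rintro ⟨y, y'⟩ hy
        rw [SetLike.mem_coe] at hy
        rw [Submodule.mem_prod] at hy ⊢
        exact ⟨hpK a ha y hy.1, hpK' a ha y' hy.2⟩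
    · -- prime condition
      rintro a ⟨y, y'⟩ hy hay
      rw [Submodule.mem_prod] at hy hay
      by_cases hap : a ∈ p
      · exact Or.inr hap
      left
      rw [Submodule.mem_prod]
      rcases hKpe.2.2 a y hy.1 hay.1 with h1 | h1
      · rcases hKpe'.2.2 a y' hy.2 hay.2 with h2 | h2
        · exact ⟨h1, h2⟩
        · exact absurd h2 hap
      · exact absurd h1 hap
    · -- maximality
      intro L _ hL hlt
      apply hlt.not_ge
      rintro ⟨y, y'⟩ hy
      have hpy : ∀ a ∈ p, a • (y, y') ∈ N.prod N' := by
        intro a ha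
        exact Submodule.mem_colon.mp (hL.2.1 ▸ ha : a ∈ (N.prod N').colon L) _ hy
      rw [Submodule.mem_prod]
      constructor
      · refine mem_of_regular_of_smul_mem ⟨⟨le_top, hKpe, hmax⟩, hpmax⟩ y (fun a ha => ?_)
        exact (Submodule.mem_prod.mp (hpy a ha)).1
      · refine mem_of_regular_of_smul_mem ⟨⟨le_top, hKpe', hmax'⟩, hpmax'⟩ y' (fun a ha => ?_)
        exact (Submodule.mem_prod.mp (hpy a ha)).2
  · -- regularity: p maximal in Ass of the product quotient
    have hann : ∀ (x : M) (x' : M') (a : R),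
        a ∈ (Submodule.span R {(N.prod N').mkQ (x, x')}).annihilator ↔
          a ∈ (Submodule.span R {N.mkQ x}).annihilator ∧
            a ∈ (Submodule.span R {N'.mkQ x'}).annihilator := by
      intro x x' a
      rw [mem_ann_mkQ, mem_ann_mkQ, mem_ann_mkQ, Submodule.mem_prod]
      rfl
    constructor
    · -- p ∈ assOf
      rw [assOf_top]
      obtain ⟨hp1, z, hz⟩ := (by rw [assOf_top] at hpmax; exact isAssociatedPrime_iff.mp (AssociatedPrimes.mem_iff.mp hpmax.1) :
        p.IsPrime ∧ ∃ x : M ⧸ N, p = Submodule.colon ⊥ {x})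
      obtain ⟨x, rfl⟩ := Submodule.Quotient.mk_surjective N z
      refine isAssociatedPrime_iff.mpr ⟨hp, (N.prod N').mkQ (x, 0), ?_⟩
      ext a
      rw [colon_bot_eq_ann, hann]
      have hax : a ∈ (Submodule.span R {N.mkQ x}).annihilator ↔ a ∈ p := by
        rw [hz, colon_bot_eq_ann]; rw [Submodule.mkQ_apply]
      constructor
      · intro hap
        exact ⟨hax.mpr hap, by rw [mem_ann_mkQ]; simp⟩
      · exact fun hc => hax.mp hc.1
    · -- maximality in Ass
      intro q hq hpq
      rw [assOf_top] at hq
      obtain ⟨hq1, w, hw⟩ := isAssociatedPrime_iff.mp (AssociatedPrimes.mem_iff.mp hq)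
      obtain ⟨⟨x, x'⟩, rfl⟩ := Submodule.Quotient.mk_surjective (N.prod N') w
      set I := (Submodule.span R {N.mkQ x}).annihilator with hI
      set J := (Submodule.span R {N'.mkQ x'}).annihilator with hJ
      have hqIJ : q = I ⊓ J := by
        ext a
        rw [hw, colon_bot_eq_ann, ← Submodule.mkQ_apply, hann, Submodule.mem_inf]
      have hmul : I * J ≤ q := hqIJ ▸ Ideal.mul_le_inf
      rcases hq1.mul_le.mp hmul with hIq | hJq
      · have hqI : q = I := le_antisymm (hqIJ ▸ inf_le_left) hIq
        have : q ∈ assOf R N (⊤ : Submodule R M) := by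
          rw [assOf_top]
          exact AssociatedPrimes.mem_iff.mpr (isAssociatedPrime_iff.mpr
            ⟨hq1, N.mkQ x, hqI.trans (colon_bot_eq_ann _).symm⟩)
        exact hpmax.2 this hpq
      · have hqJ : q = J := le_antisymm (hqIJ ▸ inf_le_right) hJq
        have : q ∈ assOf R N' (⊤ : Submodule R M') := by
          rw [assOf_top]
          exact AssociatedPrimes.mem_iff.mpr (isAssociatedPrime_iff.mpr
            ⟨hq1, N'.mkQ x', hqJ.trans (colon_bot_eq_ann _).symm⟩)
        exact hpmax'.2 this hpq
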